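/- For every tuple σ = (Σ_{ρ_0},…,Σ_{ρ_{T−1}}) ∈ M_T and every k = 0,…,T−1, the alternating-optimization update map satisfies the identity 𝒯(σ)_k − Σ_{ρ_k} = Σ_{ρ_k} L_k ( E_k Σ_{x_k} E_kᵀ − Σ_{ρ_k} − Σ_{Q_k} ) L_k Σ_{ρ_k}, where E_k = (1/ε) Σ_{Q_k} B_kᵀ Π_{k+1} A_k and L_k = (Σ_{Q_k} + Σ_{ρ_k})^{−1}. -/

import Mathlib

open Matrix Filter Topology

/-- The unique symmetric positive semidefinite square root of a positive
semidefinite real matrix (junk value `0` if the matrix is not PSD). -/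
noncomputable def msqrt {d : ℕ} (X : Matrix (Fin d) (Fin d) ℝ) :
    Matrix (Fin d) (Fin d) ℝ :=
  letI := Classical.propDecidable X.PosSemidef
  if h : X.PosSemidef then
    (h.1.eigenvectorUnitary : Matrix (Fin d) (Fin d) ℝ) *
      diagonal ((↑) ∘ Real.sqrt ∘ h.1.eigenvalues) *
      (star h.1.eigenvectorUnitary : Matrix (Fin d) (Fin d) ℝ)
  else 0

/-- The Frobenius norm of a real square matrix. -/
noncomputable def frob {d : ℕ} (X : Matrix (Fin d) (Fin d) ℝ) : ℝ :=
  Real.sqrt (∑ i, ∑ j, X i j ^ 2)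

/-- Data of the mutual information optimal control problem for a discrete-time
linear system `x_{k+1} = A_k x_k + B_k u_k + w_k`. -/
structure LQData (n m : ℕ) where
  ε : ℝ
  A : ℕ → Matrix (Fin n) (Fin n) ℝ
  B : ℕ → Matrix (Fin n) (Fin m) ℝ
  R : ℕ → Matrix (Fin m) (Fin m) ℝ
  F : Matrix (Fin n) (Fin n) ℝ
  Sw : ℕ → Matrix (Fin n) (Fin n) ℝ
  Sini : Matrix (Fin n) (Fin n) ℝ

namespace LQData

variable {n m : ℕ} (P : LQData n m) (T : ℕ) (Srho : ℕ → Matrix (Fin m) (Fin m) ℝ)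

/-- The backward Riccati recursion `Π_k` associated with the prior covariances
`Σ_{ρ_k}`: `Π_T = F` and
`Π_k = A_kᵀ Π_{k+1} A_k − (1/ε) A_kᵀ Π_{k+1} B_k Σ^{1/2} (I + Σ^{1/2} C_k Σ^{1/2})⁻¹ Σ^{1/2} B_kᵀ Π_{k+1} A_k`
with `C_k = (R_k + B_kᵀ Π_{k+1} B_k)/ε`. -/
noncomputable def Ric (k : ℕ) : Matrix (Fin n) (Fin n) ℝ :=
  if h : T ≤ k then P.F
  else
    let Pk := Ric (k + 1)
    let S := msqrt (Srho k)
    let C := (1 / P.ε) • (P.R k + (P.B k)ᵀ * Pk * P.B k)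
    (P.A k)ᵀ * Pk * P.A k -
      (1 / P.ε) • ((P.A k)ᵀ * Pk * P.B k * S * (1 + S * C * S)⁻¹ * S * (P.B k)ᵀ * Pk * P.A k)
termination_by T - k
decreasing_by omega

/-- `C_k = (R_k + B_kᵀ Π_{k+1} B_k)/ε`. -/
noncomputable def Ck (k : ℕ) : Matrix (Fin m) (Fin m) ℝ :=
  (1 / P.ε) • (P.R k + (P.B k)ᵀ * P.Ric T Srho (k + 1) * P.B k)

/-- `Σ_{Q_k} = ε (R_k + B_kᵀ Π_{k+1} B_k)⁻¹`. -/
noncomputable def SigQ (k : ℕ) : Matrix (Fin m) (Fin m) ℝ :=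
  P.ε • (P.R k + (P.B k)ᵀ * P.Ric T Srho (k + 1) * P.B k)⁻¹

/-- Covariance `Σ_{π_k}` of the optimal policy for the fixed prior. -/
noncomputable def SigPi (k : ℕ) : Matrix (Fin m) (Fin m) ℝ :=
  msqrt (Srho k) * (1 + msqrt (Srho k) * P.Ck T Srho k * msqrt (Srho k))⁻¹ * msqrt (Srho k)

/-- Feedback gain `P_k = −(1/ε) Σ_{π_k} B_kᵀ Π_{k+1} A_k`. -/
noncomputable def Pgain (k : ℕ) : Matrix (Fin m) (Fin n) ℝ :=
  -((1 / P.ε) • (P.SigPi T Srho k * (P.B k)ᵀ * P.Ric T Srho (k + 1) * P.A k))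

/-- Forward state covariance recursion under the optimal policy. -/
noncomputable def Sigx : ℕ → Matrix (Fin n) (Fin n) ℝ
  | 0 => P.Sini
  | k + 1 =>
    (P.A k + P.B k * P.Pgain T Srho k) * Sigx k *
        (P.A k + P.B k * P.Pgain T Srho k)ᵀ +
      P.B k * P.SigPi T Srho k * (P.B k)ᵀ + P.Sw k

/-- The standard LQR Riccati recursion `Π̌_k`. -/
noncomputable def RicLQR (k : ℕ) : Matrix (Fin n) (Fin n) ℝ :=
  if h : T ≤ k then P.F
  else
    let Pk := RicLQR (k + 1)
    (P.A k)ᵀ * Pk * P.A k -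
      (P.A k)ᵀ * Pk * P.B k * (P.R k + (P.B k)ᵀ * Pk * P.B k)⁻¹ * (P.B k)ᵀ * Pk * P.A k
termination_by T - k
decreasing_by omega

/-- `Π̂_k = A_kᵀ ⋯ A_{T−1}ᵀ F A_{T−1} ⋯ A_k`. -/
noncomputable def RicHat (k : ℕ) : Matrix (Fin n) (Fin n) ℝ :=
  if h : T ≤ k then P.F
  else (P.A k)ᵀ * RicHat (k + 1) * P.A k
termination_by T - k
decreasing_by omega

/-- `Σ_{w_{k−1}}` with the convention `Σ_{w_{−1}} := Σ_{x_ini}`. -/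
noncomputable def Swm1 (k : ℕ) : Matrix (Fin n) (Fin n) ℝ :=
  if k = 0 then P.Sini else P.Sw (k - 1)

/-- The matrix `M̌_k` from the sufficient condition for stochastic optimal policies. -/
noncomputable def Mcheck (k : ℕ) : Matrix (Fin m) (Fin m) ℝ :=
  (P.R k + (P.B k)ᵀ * P.RicHat T (k + 1) * P.B k)⁻¹ *
      ((P.B k)ᵀ * P.RicLQR T (k + 1) * P.A k * P.Swm1 k * (P.A k)ᵀ *
        P.RicLQR T (k + 1) * P.B k) *
      (P.R k + (P.B k)ᵀ * P.RicHat T (k + 1) * P.B k)⁻¹ -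
    P.ε • (P.R k + (P.B k)ᵀ * P.RicLQR T (k + 1) * P.B k)⁻¹

/-- State covariance under the zero control input. -/
noncomputable def SigxZero : ℕ → Matrix (Fin n) (Fin n) ℝ
  | 0 => P.Sini
  | k + 1 => P.A k * SigxZero k * (P.A k)ᵀ + P.Sw k

/-- The matrix `M̂_k^zero` from the sufficient condition for deterministic optimal policies. -/
noncomputable def MhatZero (k : ℕ) : Matrix (Fin m) (Fin m) ℝ :=
  (P.R k + (P.B k)ᵀ * P.RicLQR T (k + 1) * P.B k)⁻¹ *
      ((P.B k)ᵀ * P.RicHat T (k + 1) * P.A k * P.SigxZero k * (P.A k)ᵀ *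
        P.RicHat T (k + 1) * P.B k) *
      (P.R k + (P.B k)ᵀ * P.RicLQR T (k + 1) * P.B k)⁻¹ -
    P.ε • (P.R k + (P.B k)ᵀ * P.RicHat T (k + 1) * P.B k)⁻¹


/-- The backward recursion `r_k` for the mean offset:
`r_T = 0` and `r_k = A_k⁻¹ r_{k+1} − Π_k⁻¹ A_kᵀ Π_{k+1} B_k (I + Σ_{ρ_k} C_k)⁻¹ μ_{ρ_k}`. -/
noncomputable def rvec (μ : ℕ → Fin m → ℝ) (k : ℕ) : Fin n → ℝ :=
  if h : T ≤ k then 0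
  else
    ((P.A k)⁻¹).mulVec (rvec μ (k + 1)) -
      ((P.Ric T Srho k)⁻¹ * ((P.A k)ᵀ * P.Ric T Srho (k + 1) * P.B k *
        (1 + Srho k * P.Ck T Srho k)⁻¹)).mulVec (μ k)
termination_by T - k
decreasing_by omega

/-- `Θ_k = ε C_k − ε C_k Σ_{π_k} C_k − (I − C_k Σ_{π_k}) B_kᵀ Π_{k+1} A_k Π_k⁻¹ A_kᵀ Π_{k+1} B_k (I − Σ_{π_k} C_k)`. -/
noncomputable def Theta (k : ℕ) : Matrix (Fin m) (Fin m) ℝ :=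
  P.ε • P.Ck T Srho k - P.ε • (P.Ck T Srho k * P.SigPi T Srho k * P.Ck T Srho k) -
    (1 - P.Ck T Srho k * P.SigPi T Srho k) *
      ((P.B k)ᵀ * P.Ric T Srho (k + 1) * P.A k * (P.Ric T Srho k)⁻¹ *
        ((P.A k)ᵀ * P.Ric T Srho (k + 1) * P.B k)) *
      (1 - P.SigPi T Srho k * P.Ck T Srho k)

end LQData

/-- Extend a `T`-tuple of matrices to a function on `ℕ` (by zero). -/
def extT {m : ℕ} (T : ℕ) (σ : Fin T → Matrix (Fin m) (Fin m) ℝ) :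
    ℕ → Matrix (Fin m) (Fin m) ℝ :=
  fun k => if h : k < T then σ ⟨k, h⟩ else 0


/-- Extend a `T`-tuple of vectors to a function on `ℕ` (by zero). -/
def extV {m : ℕ} (T : ℕ) (μ : Fin T → Fin m → ℝ) : ℕ → Fin m → ℝ :=
  fun k => if h : k < T then μ ⟨k, h⟩ else 0

namespace LQData

variable {n m : ℕ} (P : LQData n m) (T : ℕ)

/-- The reduced objective `J̌` as a function of the `T`-tuple of prior covariances. -/
noncomputable def Jcheck (σ : Fin T → Matrix (Fin m) (Fin m) ℝ) : ℝ :=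
  (1 / 2) * ((P.Ric T (extT T σ) 0 * P.Sini).trace +
    ∑ k : Fin T,
      (P.ε * Real.log ((extT T σ k + P.SigQ T (extT T σ) k).det / (P.SigQ T (extT T σ) k).det) +
        (P.Ric T (extT T σ) (k + 1) * P.Sw k).trace))

/-- `L_k = (Σ_{Q_k} + Σ_{ρ_k})⁻¹`. -/
noncomputable def Lmat (Srho : ℕ → Matrix (Fin m) (Fin m) ℝ) (k : ℕ) :
    Matrix (Fin m) (Fin m) ℝ :=
  (P.SigQ T Srho k + Srho k)⁻¹

/-- `E_k = (1/ε) Σ_{Q_k} B_kᵀ Π_{k+1} A_k`. -/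
noncomputable def Emat (Srho : ℕ → Matrix (Fin m) (Fin m) ℝ) (k : ℕ) :
    Matrix (Fin m) (Fin n) ℝ :=
  (1 / P.ε) • (P.SigQ T Srho k * (P.B k)ᵀ * P.Ric T Srho (k + 1) * P.A k)

/-- `J̌'_k = (ε/2) L_k (Σ_{ρ_k} + Σ_{Q_k} − E_k Σ_{x_k} E_kᵀ) L_k`. -/
noncomputable def Jprime (Srho : ℕ → Matrix (Fin m) (Fin m) ℝ) (k : ℕ) :
    Matrix (Fin m) (Fin m) ℝ :=
  (P.ε / 2) • (P.Lmat T Srho k *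
    (Srho k + P.SigQ T Srho k - P.Emat T Srho k * P.Sigx T Srho k * (P.Emat T Srho k)ᵀ) *
    P.Lmat T Srho k)

/-- The alternating-optimization update map `𝒯` on `T`-tuples of prior covariances:
`𝒯(σ)_k = Σ_{π_k} + P_k Σ_{x_k} P_kᵀ`. -/
noncomputable def Tmap (σ : Fin T → Matrix (Fin m) (Fin m) ℝ) :
    Fin T → Matrix (Fin m) (Fin m) ℝ :=
  fun k =>
    P.SigPi T (extT T σ) k +
      P.Pgain T (extT T σ) k * P.Sigx T (extT T σ) k * (P.Pgain T (extT T σ) k)ᵀ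

/-- The objective `J` as a function of the prior means, for fixed prior covariances:
`J(μ) = (1/2)( r_0ᵀ Π_0 r_0 + Σ_k μ_{ρ_k}ᵀ Θ_k μ_{ρ_k} )`. -/
noncomputable def Jmean (Srho : ℕ → Matrix (Fin m) (Fin m) ℝ) (μ : Fin T → Fin m → ℝ) : ℝ :=
  (1 / 2) *
    (P.rvec T Srho (extV T μ) 0 ⬝ᵥ (P.Ric T Srho 0).mulVec (P.rvec T Srho (extV T μ) 0) +
      ∑ k : Fin T, μ k ⬝ᵥ (P.Theta T Srho k).mulVec (μ k))

end LQData

open Matrix Filter Topology LQData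

section Helpers

open Matrix

variable {d e : ℕ}

lemma myPosDef_smul {A : Matrix (Fin d) (Fin d) ℝ} (h : A.PosDef) {c : ℝ} (hc : 0 < c) :
    (c • A).PosDef := by
  exact h.smul hc

lemma myPosSemidef_smul {A : Matrix (Fin d) (Fin d) ℝ} (h : A.PosSemidef) {c : ℝ} (hc : 0 ≤ c) :
    (c • A).PosSemidef := by
  exact h.smul hc

lemma myPsd_transpose {A : Matrix (Fin d) (Fin d) ℝ} (h : A.PosSemidef) : Aᵀ = A := by
  rw [← conjTranspose_eq_transpose_of_trivial]; exact h.1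

lemma msqrt_psd {X : Matrix (Fin d) (Fin d) ℝ} (h : X.PosSemidef) : (msqrt X).PosSemidef := by
  rw [msqrt, dif_pos h]
  have hd : (Matrix.diagonal ((↑) ∘ Real.sqrt ∘ h.1.eigenvalues) : Matrix (Fin d) (Fin d) ℝ).PosSemidef :=
    Matrix.PosSemidef.diagonal (fun i => by simp [Real.sqrt_nonneg])
  have := hd.mul_mul_conjTranspose_same (h.1.eigenvectorUnitary : Matrix (Fin d) (Fin d) ℝ)
  rwa [← star_eq_conjTranspose] at this

lemma msqrt_mul_self {X : Matrix (Fin d) (Fin d) ℝ} (h : X.PosSemidef) :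
    msqrt X * msqrt X = X := by
  rw [msqrt, dif_pos h]
  conv_rhs => rw [h.1.spectral_theorem, Unitary.conjStarAlgAut_apply]
  simp only [Matrix.mul_assoc]
  rw [← Matrix.mul_assoc (star _) _ (_ * _), Unitary.coe_star_mul_self, Matrix.one_mul,
    ← Matrix.mul_assoc (diagonal _), diagonal_mul_diagonal]
  congr 2
  congr 1
  funext i
  simp [Real.mul_self_sqrt (h.eigenvalues_nonneg i)]

lemma msqrt_transpose {X : Matrix (Fin d) (Fin d) ℝ} (h : X.PosSemidef) :
    (msqrt X)ᵀ = msqrt X := myPsd_transpose (msqrt_psd h)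

lemma psd_conj_transpose {A : Matrix (Fin d) (Fin d) ℝ} (hA : A.PosSemidef)
    (B : Matrix (Fin d) (Fin e) ℝ) : (Bᵀ * A * B).PosSemidef := by
  have := hA.conjTranspose_mul_mul_same B
  rwa [conjTranspose_eq_transpose_of_trivial] at this

lemma psd_conj {A : Matrix (Fin d) (Fin d) ℝ} (hA : A.PosSemidef)
    (B : Matrix (Fin e) (Fin d) ℝ) : (B * A * Bᵀ).PosSemidef := by
  have := hA.mul_mul_conjTranspose_same B
  rwa [conjTranspose_eq_transpose_of_trivial] at this

lemma one_sub_conj_psd {M : Matrix (Fin d) (Fin d) ℝ} {N : Matrix (Fin e) (Fin d) ℝ}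
    (hM : M.PosDef) (hMN : (M - Nᵀ * N).PosSemidef) :
    ((1 : Matrix (Fin e) (Fin e) ℝ) - N * M⁻¹ * Nᵀ).PosSemidef := by
  haveI : Invertible M := M.invertibleOfIsUnitDet (isUnit_iff_ne_zero.mpr hM.det_pos.ne')
  haveI : Invertible (1 : Matrix (Fin e) (Fin e) ℝ) := invertibleOne
  have h1 := Matrix.PosDef.fromBlocks₁₁ (A := M) Nᵀ (1 : Matrix (Fin e) (Fin e) ℝ) hM
  have h2 := Matrix.PosDef.fromBlocks₂₂ M Nᵀ (Matrix.PosDef.one (n := Fin e))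
  rw [conjTranspose_eq_transpose_of_trivial, transpose_transpose] at h1 h2
  rw [inv_one, Matrix.mul_one] at h2
  exact h1.mp (h2.mpr hMN)

end Helpers
open Matrix in
lemma ric_psd {n m : ℕ} (P : LQData n m) (T : ℕ) (Srho : ℕ → Matrix (Fin m) (Fin m) ℝ)
    (hε : 0 < P.ε) (hR : ∀ k < T, (P.R k).PosDef) (hF : P.F.PosDef)
    (hS : ∀ k, (Srho k).PosSemidef) : ∀ k, (P.Ric T Srho k).PosSemidef := by
  suffices H : ∀ j k, T - k ≤ j → (P.Ric T Srho k).PosSemidef by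
    intro k; exact H (T - k) k le_rfl
  intro j
  induction j with
  | zero =>
    intro k hk
    rw [LQData.Ric, dif_pos (by omega)]
    exact hF.posSemidef
  | succ j ih =>
    intro k hk
    by_cases hTk : T ≤ k
    · rw [LQData.Ric, dif_pos hTk]; exact hF.posSemidef
    · have hPi : (P.Ric T Srho (k + 1)).PosSemidef := ih (k + 1) (by omega)
      rw [LQData.Ric, dif_neg hTk]
      set Pi1 := P.Ric T Srho (k + 1) with hPi1def
      set A := P.A k with hA
      set B := P.B k with hB
      set S := msqrt (Srho k) with hSdef
      have hSpsd : S.PosSemidef := msqrt_psd (hS k)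
      have hSS : Sᵀ = S := myPsd_transpose hSpsd
      have hGpd : (P.R k + Bᵀ * Pi1 * B).PosDef :=
        (hR k (by omega)).add_posSemidef (psd_conj_transpose hPi B)
      set G := P.R k + Bᵀ * Pi1 * B with hGdef
      set C := (1 / P.ε) • G with hCdef
      have hCpsd : C.PosSemidef := myPosSemidef_smul hGpd.posSemidef (by positivity)
      have hSCS : (S * C * S).PosSemidef := by
        have := psd_conj_transpose hCpsd S
        rwa [hSS] at this
      have hM : ((1 : Matrix (Fin m) (Fin m) ℝ) + S * C * S).PosDef :=
        Matrix.PosDef.one.add_posSemidef hSCS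
      set M := (1 : Matrix (Fin m) (Fin m) ℝ) + S * C * S with hMdef
      set Q := msqrt Pi1 with hQdef
      have hQQ : Q * Q = Pi1 := msqrt_mul_self hPi
      have hQT : Qᵀ = Q := myPsd_transpose (msqrt_psd hPi)
      set N := Q * B * S with hNdef
      set M' := P.ε • M with hM'def
      have hM'pd : M'.PosDef := myPosDef_smul hM hε
      have hNT : Nᵀ = S * Bᵀ * Q := by
        rw [hNdef, transpose_mul, transpose_mul, hSS, hQT, Matrix.mul_assoc]
      have hMN : (M' - Nᵀ * N).PosSemidef := by
        have hexp : M' - Nᵀ * N = P.ε • (1 : Matrix (Fin m) (Fin m) ℝ) + S * P.R k * S := by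
          rw [hM'def, hMdef, hNT, hNdef, hCdef, hGdef]
          rw [smul_add, Matrix.mul_smul, Matrix.smul_mul, smul_smul,
            mul_one_div, div_self hε.ne', one_smul]
          simp only [Matrix.mul_add, Matrix.add_mul, Matrix.mul_assoc, hQQ]
          rw [← Matrix.mul_assoc Q Q, hQQ]
          abel
        rw [hexp]
        exact ((myPosSemidef_smul Matrix.PosSemidef.one hε.le).add
          (by have := psd_conj_transpose (hR k (by omega)).posSemidef S; rwa [hSS] at this))
      have key : ((1 : Matrix (Fin n) (Fin n) ℝ) - N * M'⁻¹ * Nᵀ).PosSemidef :=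
        one_sub_conj_psd hM'pd hMN
      have hMinv : M'⁻¹ = (1 / P.ε) • M⁻¹ := by
        apply Matrix.inv_eq_right_inv
        rw [hM'def, Matrix.smul_mul, Matrix.mul_smul, smul_smul, mul_one_div,
          div_self hε.ne', one_smul,
          Matrix.mul_nonsing_inv _ (isUnit_iff_ne_zero.mpr hM.det_pos.ne')]
      have hinner : (Q * ((1 : Matrix (Fin n) (Fin n) ℝ) - N * M'⁻¹ * Nᵀ) * Q).PosSemidef := by
        have := key.mul_mul_conjTranspose_same Q
        rwa [conjTranspose_eq_transpose_of_trivial, hQT] at this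
      have hfact : Aᵀ * Pi1 * A -
          (1 / P.ε) • (Aᵀ * Pi1 * B * S * M⁻¹ * S * Bᵀ * Pi1 * A) =
          Aᵀ * (Q * ((1 : Matrix (Fin n) (Fin n) ℝ) - N * M'⁻¹ * Nᵀ) * Q) * A := by
        rw [hMinv, hNT, hNdef]
        simp only [Matrix.mul_sub, Matrix.sub_mul, Matrix.mul_one, Matrix.one_mul,
          Matrix.mul_smul, Matrix.smul_mul, Matrix.mul_assoc, hQQ]
        rw [← Matrix.mul_assoc Q Q, hQQ]
      rw [hfact]
      exact psd_conj_transpose hinner A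

open Matrix Filter Topology LQData

theorem tmap_update_identity {n m : ℕ} (hn : 1 ≤ n) (hm : 1 ≤ m) (T : ℕ) (hT : 1 ≤ T)
    (P : LQData n m) (hε : 0 < P.ε)
    (hR : ∀ k < T, (P.R k).PosDef) (hSw : ∀ k < T, (P.Sw k).PosDef)
    (hF : P.F.PosDef) (hSini : P.Sini.PosDef)
    (σ : Fin T → Matrix (Fin m) (Fin m) ℝ) (hσ : ∀ k, (σ k).PosSemidef) :
    ∀ k : Fin T,
      P.Tmap T σ k - σ k =
        σ k * P.Lmat T (extT T σ) k *
          (P.Emat T (extT T σ) k * P.Sigx T (extT T σ) k * (P.Emat T (extT T σ) k)ᵀ -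
            σ k - P.SigQ T (extT T σ) k) *
          P.Lmat T (extT T σ) k * σ k := by
  intro k
  have hk : (k : ℕ) < T := k.2
  set ρ : ℕ → Matrix (Fin m) (Fin m) ℝ := extT T σ with hρdef
  have hρpsd : ∀ j, (ρ j).PosSemidef := by
    intro j
    by_cases h : j < T
    · simpa [hρdef, extT, h] using hσ ⟨j, h⟩
    · simp [hρdef, extT, h]
      exact Matrix.PosSemidef.zero
  have hρk : ρ (k : ℕ) = σ k := by simp [hρdef, extT, hk]
  set Pi1 := P.Ric T ρ ((k : ℕ) + 1) with hPi1def
  have hPi : Pi1.PosSemidef := ric_psd P T ρ hε hR hF hρpsd _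
  set A := P.A (k : ℕ) with hA
  set B := P.B (k : ℕ) with hB
  have hGpd : (P.R (k : ℕ) + Bᵀ * Pi1 * B).PosDef :=
    (hR (k : ℕ) hk).add_posSemidef (psd_conj_transpose hPi B)
  set G := P.R (k : ℕ) + Bᵀ * Pi1 * B with hGdef
  have hGdet : IsUnit G.det := isUnit_iff_ne_zero.mpr hGpd.det_pos.ne'
  -- the main objects
  set Q := P.SigQ T ρ (k : ℕ) with hQdef
  set Cm := P.Ck T ρ (k : ℕ) with hCmdef
  set L := P.Lmat T ρ (k : ℕ) with hLdef
  set E := P.Emat T ρ (k : ℕ) with hEdef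
  set X := P.Sigx T ρ (k : ℕ) with hXdef
  have hQeq : Q = P.ε • G⁻¹ := by rw [hQdef]; rfl
  have hCmeq : Cm = (1 / P.ε) • G := by rw [hCmdef]; rfl
  have hQpd : Q.PosDef := by rw [hQeq]; exact myPosDef_smul hGpd.inv hε
  have hCQ : Cm * Q = 1 := by
    rw [hCmeq, hQeq, Matrix.smul_mul, Matrix.mul_smul, smul_smul, one_div,
      inv_mul_cancel₀ hε.ne', Matrix.mul_nonsing_inv _ hGdet, one_smul]
  have hQC : Q * Cm = 1 := by
    rw [hCmeq, hQeq, Matrix.smul_mul, Matrix.mul_smul, smul_smul, mul_one_div,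
      div_self hε.ne', Matrix.nonsing_inv_mul _ hGdet, one_smul]
  set S := msqrt (σ k) with hSdef
  have hSpsd : S.PosSemidef := msqrt_psd (hσ k)
  have hss : S * S = σ k := msqrt_mul_self (hσ k)
  have hSS : Sᵀ = S := myPsd_transpose hSpsd
  have hCmpsd : Cm.PosSemidef := by
    rw [hCmeq]; exact myPosSemidef_smul hGpd.posSemidef (by positivity)
  have hMpd : ((1 : Matrix (Fin m) (Fin m) ℝ) + S * Cm * S).PosDef := by
    refine Matrix.PosDef.one.add_posSemidef ?_
    have := psd_conj_transpose hCmpsd S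
    rwa [hSS] at this
  have hQσpd : (Q + σ k).PosDef := hQpd.add_posSemidef (hσ k)
  have hQσdet : IsUnit (Q + σ k).det := isUnit_iff_ne_zero.mpr hQσpd.det_pos.ne'
  have hLeq : L = (Q + σ k)⁻¹ := by rw [hLdef, LQData.Lmat, hρk, hQdef]
  have hLmul : L * (Q + σ k) = 1 := by rw [hLeq]; exact Matrix.nonsing_inv_mul _ hQσdet
  -- invertibility of 1 + Cm σ
  have h1Cρ : (1 : Matrix (Fin m) (Fin m) ℝ) + Cm * σ k = Cm * (Q + σ k) := by
    rw [mul_add, hCQ]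
  have h1Cdet : IsUnit ((1 : Matrix (Fin m) (Fin m) ℝ) + Cm * σ k).det := by
    rw [h1Cρ, Matrix.det_mul]
    refine (isUnit_iff_ne_zero.mpr ?_)
    have hCmpd : Cm.PosDef := by rw [hCmeq]; exact myPosDef_smul hGpd (by positivity)
    exact (mul_pos hCmpd.det_pos hQσpd.det_pos).ne'
  have hMdet : IsUnit ((1 : Matrix (Fin m) (Fin m) ℝ) + S * Cm * S).det :=
    isUnit_iff_ne_zero.mpr hMpd.det_pos.ne'
  have hpush : ((1 : Matrix (Fin m) (Fin m) ℝ) + S * Cm * S)⁻¹ * S =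
      S * ((1 : Matrix (Fin m) (Fin m) ℝ) + Cm * σ k)⁻¹ := by
    have hkey : ((1 : Matrix (Fin m) (Fin m) ℝ) + S * Cm * S) *
        (S * ((1 : Matrix (Fin m) (Fin m) ℝ) + Cm * σ k)⁻¹) = S := by
      rw [← Matrix.mul_assoc]
      have h2 : ((1 : Matrix (Fin m) (Fin m) ℝ) + S * Cm * S) * S =
          S * ((1 : Matrix (Fin m) (Fin m) ℝ) + Cm * σ k) := by
        rw [Matrix.add_mul, Matrix.one_mul, Matrix.mul_add, Matrix.mul_one, ← hss]
        noncomm_ring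
      rw [h2, Matrix.mul_assoc, Matrix.mul_nonsing_inv _ h1Cdet, Matrix.mul_one]
    calc ((1 : Matrix (Fin m) (Fin m) ℝ) + S * Cm * S)⁻¹ * S
        = ((1 : Matrix (Fin m) (Fin m) ℝ) + S * Cm * S)⁻¹ *
            (((1 : Matrix (Fin m) (Fin m) ℝ) + S * Cm * S) *
              (S * ((1 : Matrix (Fin m) (Fin m) ℝ) + Cm * σ k)⁻¹)) := by rw [hkey]
      _ = S * ((1 : Matrix (Fin m) (Fin m) ℝ) + Cm * σ k)⁻¹ := by
          rw [← Matrix.mul_assoc, Matrix.nonsing_inv_mul _ hMdet, Matrix.one_mul]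
  have hCminv : Cm⁻¹ = Q := Matrix.inv_eq_right_inv hCQ
  have hSπ : P.SigPi T ρ (k : ℕ) = σ k * (L * Q) := by
    rw [LQData.SigPi, hρk, ← hSdef, ← hCmdef]
    rw [Matrix.mul_assoc, hpush, ← Matrix.mul_assoc, hss, h1Cρ, Matrix.mul_inv_rev,
      hCminv, ← hLeq]
  have hσT : (σ k)ᵀ = σ k := myPsd_transpose (hσ k)
  have hQT : Qᵀ = Q := myPsd_transpose hQpd.posSemidef
  have hLT : Lᵀ = L := by
    rw [hLeq, Matrix.transpose_nonsing_inv, transpose_add, hQT, hσT]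
  have hPg : P.Pgain T ρ (k : ℕ) = -(σ k * (L * E)) := by
    rw [LQData.Pgain, ← hPi1def, ← hA, ← hB, hSπ, hEdef, LQData.Emat, ← hPi1def, ← hA, ← hB,
      ← hQdef]
    simp only [Matrix.smul_mul, Matrix.mul_smul, Matrix.mul_assoc]
  -- assemble
  show P.SigPi T ρ (k : ℕ) +
      P.Pgain T ρ (k : ℕ) * X * (P.Pgain T ρ (k : ℕ))ᵀ - σ k =
      σ k * L * (E * X * Eᵀ - σ k - Q) * L * σ k
  rw [hSπ, hPg]
  have hmid : -(σ k * (L * E)) * X * (-(σ k * (L * E)))ᵀ =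
      σ k * L * (E * X * Eᵀ) * L * σ k := by
    simp only [transpose_neg, transpose_mul, hLT, hσT, Matrix.neg_mul, Matrix.mul_neg,
      neg_neg, Matrix.mul_assoc]
  rw [hmid]
  have hexpand : σ k * L * (E * X * Eᵀ - σ k - Q) * L * σ k =
      σ k * L * (E * X * Eᵀ) * L * σ k - σ k * L * (Q + σ k) * L * σ k := by
    noncomm_ring
  rw [hexpand]
  have e1 : σ k * L * (Q + σ k) * L * σ k = σ k * L * σ k := by
    rw [mul_assoc (σ k) L (Q + σ k), hLmul, mul_one]
  rw [e1]
  have hσLQ : σ k * (L * Q) = σ k - σ k * L * σ k := by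
    have h5 : σ k * (L * Q) + σ k * L * σ k = σ k := by
      have : σ k * (L * (Q + σ k)) = σ k := by rw [hLmul, mul_one]
      rw [mul_add, mul_add] at this
      rw [mul_assoc (σ k) L (σ k)]
      exact this
    exact eq_sub_of_add_eq h5
  rw [hσLQ]
  abel
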